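/- Let p and q be coprime integers with p > q > 1 and p > 2q−1. Then the Hausdorff dimension of the topological closure in ℝ of the span-set Span = {span(n) : n ∈ ℕ} is at most (log 2)/(log p − log q). -/

import Mathlib

/-- `w` labels a branch of the base-p/q automaton with digit set `E` from state `n`:
there are states `s 0 = n, s 1, s 2, …` with `q·s(k+1) = p·s k + w k` and `w k ∈ E`. -/
def IsBranch (p q : ℕ) (E : Set ℤ) (n : ℕ) (w : ℕ → ℤ) : Prop :=
  ∃ s : ℕ → ℕ, s 0 = n ∧ ∀ k : ℕ, (q : ℤ) * s (k + 1) = p * s k + w k ∧ w k ∈ E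

/-- `u` (a word of length `ℓ`) labels a path from `n` to `m` in the base-p/q automaton
with digit set `E`. -/
def IsPath (p q : ℕ) (E : Set ℤ) (n m ℓ : ℕ) (u : ℕ → ℤ) : Prop :=
  ∃ s : ℕ → ℕ, s 0 = n ∧ s ℓ = m ∧
    ∀ k < ℓ, (q : ℤ) * s (k + 1) = p * s k + u k ∧ u k ∈ E

/-- The canonical digit alphabet `A_p = {0, 1, …, p−1}`. -/
def Ap (p : ℕ) : Set ℤ := Set.Icc 0 ((p : ℤ) - 1)

/-- The lower alphabet `{0, 1, …, q−1}`. -/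
def LowAlph (q : ℕ) : Set ℤ := Set.Icc 0 ((q : ℤ) - 1)

/-- The upper alphabet `{p−q, …, p−1}`. -/
def UpAlph (p q : ℕ) : Set ℤ := Set.Icc ((p : ℤ) - q) ((p : ℤ) - 1)

/-- The alphabet `D = {p−2q+1, …, p−1}` of the automaton `S_{p/q}`. -/
def Dalph (p q : ℕ) : Set ℤ := Set.Icc ((p : ℤ) - 2 * q + 1) ((p : ℤ) - 1)

/-- Evaluation after the radix point: `ρ(w) = Σ_{i≥1} (w_i/q)·(q/p)^i`
(here `w k` is the `(k+1)`-st digit). -/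
noncomputable def rho (p q : ℕ) (w : ℕ → ℤ) : ℝ :=
  ∑' i : ℕ, ((w i : ℝ) / q) * ((q : ℝ) / p) ^ (i + 1)

/-- The canonical digit in `[p-2q+1, p-q]` congruent to `-p·t` mod `q`. -/
def d0 (p q : ℕ) (t : ℤ) : ℤ := ((p : ℤ) - q) - (((p : ℤ) * t + ((p : ℤ) - q)) % q)

/-- States of the boolean-encoded walk. -/
def st (p q : ℕ) (b : ℕ → Bool) : ℕ → ℤ
  | 0 => 0
  | k + 1 =>
    ((p : ℤ) * st p q b k + (d0 p q (st p q b k) + (if b k then (q : ℤ) else 0))) / q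

/-- Digits of the boolean-encoded walk. -/
def dig (p q : ℕ) (b : ℕ → Bool) (k : ℕ) : ℤ :=
  d0 p q (st p q b k) + (if b k then (q : ℤ) else 0)

/-- The tail-bound constant. -/
noncomputable def Cv (p q : ℕ) : ℝ := ((p : ℝ) / q) * (1 - (q : ℝ) / p)⁻¹

/-- Partial sums of the evaluation of the boolean-encoded digit word. -/
noncomputable def Sb (p q : ℕ) (b : ℕ → Bool) (ℓ : ℕ) : ℝ :=
  ∑ i ∈ Finset.range ℓ, ((dig p q b i : ℝ) / q) * ((q : ℝ) / p) ^ (i + 1)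

lemma d0_dvd (p q : ℕ) (t : ℤ) : (q : ℤ) ∣ (p : ℤ) * t + d0 p q t := by
  have h := Int.mul_ediv_add_emod ((p : ℤ) * t + ((p : ℤ) - q)) q
  exact ⟨((p : ℤ) * t + ((p : ℤ) - q)) / q, by unfold d0; linarith⟩

lemma d0_bounds (p q : ℕ) (hq : 0 < q) (t : ℤ) :
    (p : ℤ) - 2 * q + 1 ≤ d0 p q t ∧ d0 p q t ≤ (p : ℤ) - q := by
  have hq' : (0 : ℤ) < q := by exact_mod_cast hq
  have h1 := Int.emod_nonneg ((p : ℤ) * t + ((p : ℤ) - q)) (b := (q : ℤ))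
    (by exact_mod_cast hq.ne')
  have h2 := Int.emod_lt_of_pos ((p : ℤ) * t + ((p : ℤ) - q)) hq'
  unfold d0; constructor <;> linarith

lemma dvd_dig (p q : ℕ) (b : ℕ → Bool) (k : ℕ) :
    (q : ℤ) ∣ (p : ℤ) * st p q b k + dig p q b k := by
  have h2 : (q : ℤ) ∣ (if b k then (q : ℤ) else 0) := by split <;> simp
  unfold dig
  rw [← add_assoc]
  exact dvd_add (d0_dvd p q (st p q b k)) h2

lemma st_succ (p q : ℕ) (b : ℕ → Bool) (k : ℕ) :
    (q : ℤ) * st p q b (k + 1) = (p : ℤ) * st p q b k + dig p q b k := by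
  have hd := dvd_dig p q b k
  have h : st p q b (k + 1) = ((p : ℤ) * st p q b k + dig p q b k) / q := by
    simp [st, dig, add_assoc]
  rw [h, Int.mul_ediv_cancel' hd]

lemma st_local (p q : ℕ) (b b' : ℕ → Bool) :
    ∀ k, (∀ j, j < k → b j = b' j) → st p q b k = st p q b' k := by
  intro k
  induction k with
  | zero => intro _; simp [st]
  | succ k ih =>
    intro h
    have h1 : st p q b k = st p q b' k := ih fun j hj => h j (Nat.lt_succ_of_lt hj)
    have h2 : b k = b' k := h k (Nat.lt_succ_self k)
    simp [st, h1, h2]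

lemma dig_local (p q : ℕ) (b b' : ℕ → Bool) (k : ℕ) (h : ∀ j, j ≤ k → b j = b' j) :
    dig p q b k = dig p q b' k := by
  have h1 : st p q b k = st p q b' k := st_local p q b b' k fun j hj => h j hj.le
  have h2 : b k = b' k := h k le_rfl
  simp [dig, h1, h2]

lemma uniq_digit (p q : ℕ) (hq : 1 < q) {t d : ℤ} (hd : d ∈ Dalph p q)
    (hdvd : (q : ℤ) ∣ (p : ℤ) * t + d) : d = d0 p q t ∨ d = d0 p q t + q := by
  have hq' : (0 : ℤ) < q := by exact_mod_cast (by omega : 0 < q)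
  obtain ⟨hb1, hb2⟩ := d0_bounds p q (by omega) t
  obtain ⟨hd1, hd2⟩ := Set.mem_Icc.mp hd
  have h1 : (q : ℤ) ∣ d - d0 p q t := by
    have h := hdvd.sub (d0_dvd p q t)
    simpa using h
  obtain ⟨c, hc⟩ := h1
  have hc0 : (-1 : ℤ) < c := by nlinarith
  have hc1 : c < 2 := by nlinarith
  interval_cases c
  · left; linarith
  · right; linarith

lemma represent (p q : ℕ) (hq : 1 < q) (t d : ℕ → ℤ) (h0 : t 0 = 0)
    (hrec : ∀ k, (q : ℤ) * t (k + 1) = (p : ℤ) * t k + d k)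
    (hmem : ∀ k, d k ∈ Dalph p q) :
    ∃ b : ℕ → Bool, ∀ k, dig p q b k = d k := by
  have hq0 : 0 < q := by omega
  have hqz : (q : ℤ) ≠ 0 := by exact_mod_cast hq0.ne'
  set b : ℕ → Bool := fun k => decide (d k ≠ d0 p q (t k)) with hb
  have hdig : ∀ k, st p q b k = t k → dig p q b k = d k := by
    intro k hst
    have hdvd : (q : ℤ) ∣ (p : ℤ) * t k + d k := ⟨t (k + 1), (hrec k).symm⟩
    rcases uniq_digit p q hq (hmem k) hdvd with h | h
    · have hbk : b k = false := by simp [hb, h]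
      simp [dig, hst, hbk, h]
    · have hne : d k ≠ d0 p q (t k) := by
        rw [h]; intro hcon
        have : (q : ℤ) = 0 := by linarith
        exact hqz this
      have hbk : b k = true := by simp [hb, hne]
      simp [dig, hst, hbk, h]
  have key : ∀ k, st p q b k = t k := by
    intro k
    induction k with
    | zero => simp [st, h0]
    | succ k ih =>
      have h1 := st_succ p q b k
      rw [ih, hdig k ih, ← hrec k] at h1
      exact mul_left_cancel₀ hqz h1
  exact ⟨b, fun k => hdig k (key k)⟩

lemma dig_bounds (p q : ℕ) (hq : 0 < q) (hp : 2 * q ≤ p) (b : ℕ → Bool) (k : ℕ) :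
    0 ≤ dig p q b k ∧ dig p q b k ≤ (p : ℤ) := by
  obtain ⟨h1, h2⟩ := d0_bounds p q hq (st p q b k)
  have hp' : 2 * (q : ℤ) ≤ p := by exact_mod_cast hp
  have hq' : (0 : ℤ) < q := by exact_mod_cast hq
  unfold dig; split <;> constructor <;> linarith

lemma summable_word (p q : ℕ) (hq0 : 0 < q) (hpq : q < p) (w : ℕ → ℤ)
    (hw : ∀ i, |(w i : ℝ)| ≤ p) :
    Summable fun i => ((w i : ℝ) / q) * ((q : ℝ) / p) ^ (i + 1) := by
  have hqR : (0 : ℝ) < q := by exact_mod_cast hq0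
  have hpR : (0 : ℝ) < p := by exact_mod_cast hq0.trans hpq
  have hr0 : (0 : ℝ) < (q : ℝ) / p := div_pos hqR hpR
  have hr1 : (q : ℝ) / p < 1 := (div_lt_one hpR).mpr (by exact_mod_cast hpq)
  apply Summable.of_norm
  refine Summable.of_nonneg_of_le (fun i => norm_nonneg _) (fun i => ?_)
    ((summable_geometric_of_lt_one hr0.le hr1).mul_left (((p : ℝ) / q) * ((q : ℝ) / p)))
  have h1 : ‖((w i : ℝ) / q) * ((q : ℝ) / p) ^ (i + 1)‖
      = (|(w i : ℝ)| / q) * ((q : ℝ) / p) ^ (i + 1) := by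
    rw [norm_mul, Real.norm_eq_abs, Real.norm_eq_abs, abs_div,
      abs_of_nonneg hqR.le, abs_of_nonneg (pow_nonneg hr0.le _)]
  rw [h1, pow_succ']
  calc (|(w i : ℝ)| / q) * (((q : ℝ) / p) * ((q : ℝ) / p) ^ i)
      ≤ ((p : ℝ) / q) * (((q : ℝ) / p) * ((q : ℝ) / p) ^ i) := by
        have hwi := hw i
        gcongr
    _ = ((p : ℝ) / q) * ((q : ℝ) / p) * ((q : ℝ) / p) ^ i := by ring

lemma abs_dig_le (p q : ℕ) (hq : 0 < q) (hp : 2 * q ≤ p) (b : ℕ → Bool) (i : ℕ) :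
    |(dig p q b i : ℝ)| ≤ p := by
  obtain ⟨h1, h2⟩ := dig_bounds p q hq hp b i
  rw [abs_of_nonneg (by exact_mod_cast h1)]
  exact_mod_cast h2

lemma rho_dig_mem (p q : ℕ) (hq0 : 0 < q) (hpq : q < p) (hp2q : 2 * q ≤ p)
    (b : ℕ → Bool) (ℓ : ℕ) :
    rho p q (dig p q b) ∈
      Set.Icc (Sb p q b ℓ) (Sb p q b ℓ + Cv p q * ((q : ℝ) / p) ^ ℓ) := by
  have hqR : (0 : ℝ) < q := by exact_mod_cast hq0
  have hpR : (0 : ℝ) < p := by exact_mod_cast hq0.trans hpq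
  have hr0 : (0 : ℝ) < (q : ℝ) / p := div_pos hqR hpR
  have hr1 : (q : ℝ) / p < 1 := (div_lt_one hpR).mpr (by exact_mod_cast hpq)
  have hf : Summable fun i => ((dig p q b i : ℝ) / q) * ((q : ℝ) / p) ^ (i + 1) :=
    summable_word p q hq0 hpq _ (abs_dig_le p q hq0 hp2q b)
  have hsplit := hf.sum_add_tsum_nat_add ℓ
  have hrho : rho p q (dig p q b)
      = Sb p q b ℓ + ∑' i, ((dig p q b (i + ℓ) : ℝ) / q) * ((q : ℝ) / p) ^ (i + ℓ + 1) := by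
    rw [rho, Sb, ← hsplit]
  have hgs : Summable fun i : ℕ => ((p : ℝ) / q) * ((q : ℝ) / p) ^ ℓ * ((q : ℝ) / p) ^ i :=
    (summable_geometric_of_lt_one hr0.le hr1).mul_left _
  have htailsum : Summable fun i =>
      ((dig p q b (i + ℓ) : ℝ) / q) * ((q : ℝ) / p) ^ (i + ℓ + 1) :=
    (summable_nat_add_iff
      (f := fun i => ((dig p q b i : ℝ) / q) * ((q : ℝ) / p) ^ (i + 1)) ℓ).2 hf
  have hub : ∑' i, ((dig p q b (i + ℓ) : ℝ) / q) * ((q : ℝ) / p) ^ (i + ℓ + 1)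
      ≤ Cv p q * ((q : ℝ) / p) ^ ℓ := by
    have hle : ∀ i, ((dig p q b (i + ℓ) : ℝ) / q) * ((q : ℝ) / p) ^ (i + ℓ + 1)
        ≤ ((p : ℝ) / q) * ((q : ℝ) / p) ^ ℓ * ((q : ℝ) / p) ^ i := by
      intro i
      have h1 : ((dig p q b (i + ℓ) : ℝ) / q) ≤ (p : ℝ) / q := by
        have h := abs_le.mp (abs_dig_le p q hq0 hp2q b (i + ℓ))
        gcongr
        exact h.2
      have h2 : ((q : ℝ) / p) ^ (i + ℓ + 1) ≤ ((q : ℝ) / p) ^ ℓ * ((q : ℝ) / p) ^ i := by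
        rw [← pow_add]
        exact pow_le_pow_of_le_one hr0.le hr1.le (by omega)
      calc ((dig p q b (i + ℓ) : ℝ) / q) * ((q : ℝ) / p) ^ (i + ℓ + 1)
          ≤ ((p : ℝ) / q) * ((q : ℝ) / p) ^ (i + ℓ + 1) :=
            mul_le_mul_of_nonneg_right h1 (pow_nonneg hr0.le _)
        _ ≤ ((p : ℝ) / q) * (((q : ℝ) / p) ^ ℓ * ((q : ℝ) / p) ^ i) :=
            mul_le_mul_of_nonneg_left h2 (by positivity)
        _ = ((p : ℝ) / q) * ((q : ℝ) / p) ^ ℓ * ((q : ℝ) / p) ^ i := by ring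
    calc ∑' i, ((dig p q b (i + ℓ) : ℝ) / q) * ((q : ℝ) / p) ^ (i + ℓ + 1)
        ≤ ∑' i : ℕ, ((p : ℝ) / q) * ((q : ℝ) / p) ^ ℓ * ((q : ℝ) / p) ^ i :=
          Summable.tsum_le_tsum hle htailsum hgs
      _ = ((p : ℝ) / q) * ((q : ℝ) / p) ^ ℓ * (1 - (q : ℝ) / p)⁻¹ := by
          rw [tsum_mul_left, tsum_geometric_of_lt_one hr0.le hr1]
      _ = Cv p q * ((q : ℝ) / p) ^ ℓ := by rw [Cv]; ring
  have hlb : 0 ≤ ∑' i, ((dig p q b (i + ℓ) : ℝ) / q) * ((q : ℝ) / p) ^ (i + ℓ + 1) := by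
    apply tsum_nonneg
    intro i
    have hnn : (0 : ℝ) ≤ (dig p q b (i + ℓ) : ℝ) := by
      exact_mod_cast (dig_bounds p q hq0 hp2q b (i + ℓ)).1
    exact mul_nonneg (div_nonneg hnn hqR.le) (pow_nonneg hr0.le _)
  rw [Set.mem_Icc, hrho]
  constructor
  · linarith
  · linarith

lemma Sb_local (p q : ℕ) (b b' : ℕ → Bool) (ℓ : ℕ) (h : ∀ j, j < ℓ → b j = b' j) :
    Sb p q b ℓ = Sb p q b' ℓ := by
  apply Finset.sum_congr rfl
  intro i hi
  rw [dig_local p q b b' i fun j hj => h j (lt_of_le_of_lt hj (Finset.mem_range.mp hi))]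

theorem stmt3 (p q : ℕ) (hco : Nat.Coprime p q) (hq : 1 < q) (hpq : q < p)
    (hbig : 2 * q - 1 < p)
    (mw mx : ℕ → ℕ → ℤ)
    (hmw : ∀ n, IsBranch p q (LowAlph q) n (mw n))
    (hmx : ∀ n, IsBranch p q (UpAlph p q) n (mx n)) :
    dimH (closure {x : ℝ | ∃ n : ℕ, x = rho p q (mx n) - rho p q (mw n)})
      ≤ ENNReal.ofReal (Real.log 2 / (Real.log p - Real.log q)) := by
  have hq0 : 0 < q := by omega
  have hp0 : 0 < p := by omega
  have hp2q : 2 * q ≤ p := by omega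
  have hqR : (0 : ℝ) < q := by exact_mod_cast hq0
  have hpR : (0 : ℝ) < p := by exact_mod_cast hp0
  have hr0 : (0 : ℝ) < (q : ℝ) / p := div_pos hqR hpR
  have hr1 : (q : ℝ) / p < 1 := (div_lt_one hpR).mpr (by exact_mod_cast hpq)
  have hC0 : 0 < Cv p q := mul_pos (div_pos hpR hqR) (inv_pos.mpr (by linarith))
  set Span : Set ℝ := {x : ℝ | ∃ n : ℕ, x = rho p q (mx n) - rho p q (mw n)} with hSpandef
  -- representation of spans
  have hspan_rep : ∀ n : ℕ, ∃ b : ℕ → Bool,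
      rho p q (mx n) - rho p q (mw n) = rho p q (dig p q b) := by
    intro n
    obtain ⟨sw, hsw0, hsw⟩ := hmw n
    obtain ⟨sx, hsx0, hsx⟩ := hmx n
    have hmwB : ∀ i, 0 ≤ mw n i ∧ mw n i ≤ (q : ℤ) - 1 := by
      intro i
      have h2 := (hsw i).2
      rw [LowAlph, Set.mem_Icc] at h2
      exact h2
    have hmxB : ∀ i, (p : ℤ) - q ≤ mx n i ∧ mx n i ≤ (p : ℤ) - 1 := by
      intro i
      have h2 := (hsx i).2
      rw [UpAlph, Set.mem_Icc] at h2
      exact h2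
    have hqpZ : (q : ℤ) < p := by exact_mod_cast hpq
    have hqZ : (0 : ℤ) < q := by exact_mod_cast hq0
    have hmwb : ∀ i, |(mw n i : ℝ)| ≤ p := by
      intro i
      have h := hmwB i
      have h' : |mw n i| ≤ (p : ℤ) := abs_le.mpr ⟨by linarith [h.1], by linarith [h.2]⟩
      exact_mod_cast h'
    have hmxb : ∀ i, |(mx n i : ℝ)| ≤ p := by
      intro i
      have h := hmxB i
      have h' : |mx n i| ≤ (p : ℤ) := abs_le.mpr ⟨by linarith [h.1], by linarith [h.2]⟩
      exact_mod_cast h'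
    have h0 : ((sx 0 : ℤ) - sw 0) = 0 := by rw [hsw0, hsx0]; ring
    have hrec : ∀ k, (q : ℤ) * ((sx (k + 1) : ℤ) - sw (k + 1))
        = (p : ℤ) * ((sx k : ℤ) - sw k) + (mx n k - mw n k) := by
      intro k
      have h1 := (hsx k).1
      have h2 := (hsw k).1
      ring_nf
      ring_nf at h1 h2
      linarith
    have hmem : ∀ k, mx n k - mw n k ∈ Dalph p q := by
      intro k
      have h1 := hmxB k
      have h2 := hmwB k
      rw [Dalph, Set.mem_Icc]
      constructor
      · linarith [h1.1, h2.2]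
      · linarith [h1.2, h2.1]
    obtain ⟨b, hb⟩ := represent p q hq (fun k => (sx k : ℤ) - sw k)
      (fun k => mx n k - mw n k) h0 hrec hmem
    refine ⟨b, ?_⟩
    have hsub : rho p q (mx n) - rho p q (mw n)
        = ∑' i, (((mx n i - mw n i : ℤ) : ℝ) / q) * ((q : ℝ) / p) ^ (i + 1) := by
      rw [rho, rho, ← Summable.tsum_sub (summable_word p q hq0 hpq _ hmxb)
        (summable_word p q hq0 hpq _ hmwb)]
      apply tsum_congr
      intro i
      push_cast
      ring
    rw [hsub, rho]
    apply tsum_congr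
    intro i
    rw [hb i]
  -- covering of the closure
  have hcover : ∀ ℓ : ℕ, closure Span ⊆
      ⋃ β : Fin ℓ → Bool,
        Set.Icc (Sb p q (fun k => if h : k < ℓ then β ⟨k, h⟩ else false) ℓ)
          (Sb p q (fun k => if h : k < ℓ then β ⟨k, h⟩ else false) ℓ
            + Cv p q * ((q : ℝ) / p) ^ ℓ) := by
    intro ℓ
    apply closure_minimal _ (isClosed_iUnion_of_finite fun β => isClosed_Icc)
    rintro x ⟨n, rfl⟩
    obtain ⟨b, hb⟩ := hspan_rep n
    refine Set.mem_iUnion.mpr ⟨fun i => b i, ?_⟩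
    have hloc : Sb p q (fun k => if h : k < ℓ then b k else false) ℓ = Sb p q b ℓ :=
      Sb_local p q _ _ ℓ (fun j hj => by simp [hj])
    rw [hb, hloc]
    exact rho_dig_mem p q hq0 hpq hp2q b ℓ
  -- dimension exponent facts
  have hlogpq : 0 < Real.log p - Real.log q :=
    sub_pos.mpr (Real.log_lt_log hqR (by exact_mod_cast hpq))
  set sdim : ℝ := Real.log 2 / (Real.log p - Real.log q) with hsdef
  have hsd0 : 0 ≤ sdim := div_nonneg (Real.log_nonneg one_le_two) hlogpq.le
  have hrsd : ((q : ℝ) / p) ^ sdim = 1 / 2 := by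
    rw [Real.rpow_def_of_pos hr0]
    have hlr : Real.log ((q : ℝ) / p) = Real.log q - Real.log p :=
      Real.log_div hqR.ne' hpR.ne'
    have hne : Real.log p - Real.log q ≠ 0 := ne_of_gt hlogpq
    have hmul : Real.log ((q : ℝ) / p) * sdim = -Real.log 2 := by
      rw [hlr, hsdef]
      field_simp
      ring
    rw [hmul, Real.exp_neg, Real.exp_log two_pos]
    norm_num
  -- the Hausdorff measure bound
  have hmeasle : MeasureTheory.Measure.hausdorffMeasure (X := ℝ) sdim (closure Span)
      ≤ ENNReal.ofReal (Cv p q ^ sdim) := by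
    have htend : Filter.Tendsto (fun ℓ : ℕ => ENNReal.ofReal (Cv p q * ((q : ℝ) / p) ^ ℓ))
        Filter.atTop (nhds 0) := by
      rw [← ENNReal.ofReal_zero]
      apply ENNReal.tendsto_ofReal
      simpa using (tendsto_pow_atTop_nhds_zero_of_lt_one hr0.le hr1).const_mul (Cv p q)
    have hdiam : ∀ ℓ : ℕ, ∀ β : Fin ℓ → Bool,
        Metric.ediam (Set.Icc (Sb p q (fun k => if h : k < ℓ then β ⟨k, h⟩ else false) ℓ)
          (Sb p q (fun k => if h : k < ℓ then β ⟨k, h⟩ else false) ℓ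
            + Cv p q * ((q : ℝ) / p) ^ ℓ))
          ≤ ENNReal.ofReal (Cv p q * ((q : ℝ) / p) ^ ℓ) := by
      intro ℓ β
      rw [Real.ediam_Icc]
      simp
    have hkey := MeasureTheory.Measure.hausdorffMeasure_le_liminf_sum
      (ι := fun ℓ : ℕ => (Fin ℓ → Bool)) sdim (closure Span)
      (fun ℓ => ENNReal.ofReal (Cv p q * ((q : ℝ) / p) ^ ℓ))
      htend
      (fun ℓ β => Set.Icc (Sb p q (fun k => if h : k < ℓ then β ⟨k, h⟩ else false) ℓ)
          (Sb p q (fun k => if h : k < ℓ then β ⟨k, h⟩ else false) ℓ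
            + Cv p q * ((q : ℝ) / p) ^ ℓ))
      (Filter.Eventually.of_forall hdiam)
      (Filter.Eventually.of_forall hcover)
    refine hkey.trans ?_
    have hval : ∀ ℓ : ℕ,
        (∑ β : Fin ℓ → Bool,
          Metric.ediam (Set.Icc (Sb p q (fun k => if h : k < ℓ then β ⟨k, h⟩ else false) ℓ)
            (Sb p q (fun k => if h : k < ℓ then β ⟨k, h⟩ else false) ℓ
              + Cv p q * ((q : ℝ) / p) ^ ℓ)) ^ sdim)
          = ENNReal.ofReal (Cv p q ^ sdim) := by
      intro ℓ
      have hterm : ∀ β : Fin ℓ → Bool,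
          Metric.ediam (Set.Icc (Sb p q (fun k => if h : k < ℓ then β ⟨k, h⟩ else false) ℓ)
            (Sb p q (fun k => if h : k < ℓ then β ⟨k, h⟩ else false) ℓ
              + Cv p q * ((q : ℝ) / p) ^ ℓ)) ^ sdim
          = ENNReal.ofReal (Cv p q ^ sdim) * ENNReal.ofReal ((1 / 2 : ℝ) ^ ℓ) := by
        intro β
        rw [Real.ediam_Icc]
        have h1 : Sb p q (fun k => if h : k < ℓ then β ⟨k, h⟩ else false) ℓ
            + Cv p q * ((q : ℝ) / p) ^ ℓ
            - Sb p q (fun k => if h : k < ℓ then β ⟨k, h⟩ else false) ℓ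
            = Cv p q * ((q : ℝ) / p) ^ ℓ := by ring
        rw [h1, ENNReal.ofReal_rpow_of_pos (mul_pos hC0 (pow_pos hr0 ℓ))]
        have h2 : (Cv p q * ((q : ℝ) / p) ^ ℓ) ^ sdim
            = Cv p q ^ sdim * (1 / 2 : ℝ) ^ ℓ := by
          rw [Real.mul_rpow hC0.le (pow_nonneg hr0.le _)]
          congr 1
          rw [← Real.rpow_natCast ((q : ℝ) / p) ℓ, ← Real.rpow_mul hr0.le, mul_comm,
            Real.rpow_mul hr0.le, Real.rpow_natCast, hrsd]
        rw [h2, ENNReal.ofReal_mul (Real.rpow_nonneg hC0.le _)]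
      rw [Finset.sum_congr rfl fun β _ => hterm β, Finset.sum_const, Finset.card_univ]
      have hcard : Fintype.card (Fin ℓ → Bool) = 2 ^ ℓ := by
        simp [Fintype.card_fun]
      rw [hcard, nsmul_eq_mul]
      have hhalf : ENNReal.ofReal ((1 / 2 : ℝ) ^ ℓ) = 2⁻¹ ^ ℓ := by
        rw [ENNReal.ofReal_pow (by norm_num), one_div,
          ENNReal.ofReal_inv_of_pos two_pos, ENNReal.ofReal_ofNat]
      rw [hhalf, Nat.cast_pow, Nat.cast_ofNat,
        mul_comm (ENNReal.ofReal (Cv p q ^ sdim)), ← mul_assoc, ← mul_pow,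
        ENNReal.mul_inv_cancel two_ne_zero (by simp), one_pow, one_mul]
    have heq : (fun ℓ : ℕ =>
        ∑ β : Fin ℓ → Bool,
          Metric.ediam (Set.Icc (Sb p q (fun k => if h : k < ℓ then β ⟨k, h⟩ else false) ℓ)
            (Sb p q (fun k => if h : k < ℓ then β ⟨k, h⟩ else false) ℓ
              + Cv p q * ((q : ℝ) / p) ^ ℓ)) ^ sdim)
        = fun _ : ℕ => ENNReal.ofReal (Cv p q ^ sdim) := funext hval
    rw [heq, Filter.liminf_const]
  -- conclude
  have hne : MeasureTheory.Measure.hausdorffMeasure (X := ℝ) sdim (closure Span) ≠ ⊤ :=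
    (hmeasle.trans_lt ENNReal.ofReal_lt_top).ne
  have h1 : dimH (closure Span) ≤ ((sdim.toNNReal : NNReal) : ENNReal) := by
    apply dimH_le_of_hausdorffMeasure_ne_top
    rwa [Real.coe_toNNReal _ hsd0]
  exact h1
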